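/- For the Hawk-Dove game with a=d=0, b=c=1 in the boundary mutation regime, the stationary distribution of the Moran process is s₀ = s_N = 1/(2 + 2μ(2^N - 2)) and s_j = 2μ·C(N,j)/(2 + 2μ(2^N - 2)) for 1 ≤ j ≤ N-1; this follows from verifying detailed balance and Σⱼ sⱼ = 1. -/

import Mathlib

open Finset

/-- Stationary distribution of the boundary-mutation Moran process for the
Hawk-Dove game a=d=0, b=c=1. -/
noncomputable def hawkDoveStat (N : ℕ) (μ : ℝ) (j : ℕ) : ℝ :=
  if j = 0 ∨ j = N then 1 / (2 + 2 * μ * (2 ^ N - 2))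
  else 2 * μ * (N.choose j : ℝ) / (2 + 2 * μ * (2 ^ N - 2))

/-- Up-transition T_{i→i+1}: μ at i = 0, (N-i)/(2N) for 1 ≤ i ≤ N-1. -/
noncomputable def hawkDoveUp (N : ℕ) (μ : ℝ) (i : ℕ) : ℝ :=
  if i = 0 then μ else ((N : ℝ) - i) / (2 * N)

/-- Down-transition T_{i→i-1}: μ at i = N, i/(2N) for 1 ≤ i ≤ N-1. -/
noncomputable def hawkDoveDown (N : ℕ) (μ : ℝ) (i : ℕ) : ℝ :=
  if i = N then μ else (i : ℝ) / (2 * N)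

theorem hawkDove_stationary (N : ℕ) (hN : 2 ≤ N) (μ : ℝ)
    (hμ : μ ∈ Set.Ioo (0 : ℝ) 1) :
    (∑ j ∈ range (N + 1), hawkDoveStat N μ j) = 1 ∧
    (∀ i < N, hawkDoveStat N μ i * hawkDoveUp N μ i
        = hawkDoveStat N μ (i + 1) * hawkDoveDown N μ (i + 1)) := by
  obtain ⟨hμ0, hμ1⟩ := hμ
  have h2N : (4 : ℝ) ≤ 2 ^ N := by
    calc (4:ℝ) = 2^2 := by norm_num
    _ ≤ 2 ^ N := by exact pow_le_pow_right₀ (by norm_num) hN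
  have hD : (0:ℝ) < 2 + 2 * μ * (2 ^ N - 2) := by
    have h22 : (0:ℝ) ≤ 2 ^ N - 2 := by linarith
    have : (0:ℝ) ≤ 2 * μ * (2 ^ N - 2) := by positivity
    linarith
  set D : ℝ := 2 + 2 * μ * (2 ^ N - 2) with hDdef
  have hDne : D ≠ 0 := ne_of_gt hD
  have hNR : (0:ℝ) < (N:ℝ) := by positivity
  constructor
  · obtain ⟨n, rfl⟩ : ∃ n, N = n + 2 := ⟨N - 2, by omega⟩
    rw [Finset.sum_range_succ, Finset.sum_range_succ']
    have h0 : hawkDoveStat (n+2) μ 0 = 1 / D := by simp [hawkDoveStat, hDdef]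
    have hlast : hawkDoveStat (n+2) μ (n+2) = 1 / D := by simp [hawkDoveStat, hDdef]
    have hmid : ∀ i ∈ range (n+1), hawkDoveStat (n+2) μ (i+1)
        = 2 * μ * ((n+2).choose (i+1) : ℝ) / D := by
      intro i hi
      simp only [mem_range] at hi
      rw [hawkDoveStat, if_neg (by omega)]
    rw [Finset.sum_congr rfl hmid, h0, hlast]
    have hsum : ∑ i ∈ range (n+1), ((n+2).choose (i+1) : ℝ) = 2 ^ (n+2) - 2 := by
      have := Nat.sum_range_choose (n+2)
      have h' : ∑ i ∈ range (n+3), ((n+2).choose i : ℝ) = 2 ^ (n+2) := by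
        exact_mod_cast congrArg (Nat.cast : ℕ → ℝ) this
      rw [Finset.sum_range_succ, Finset.sum_range_succ'] at h'
      simp only [Nat.choose_zero_right, Nat.choose_self, Nat.cast_one] at h'
      linarith
    have : ∑ i ∈ range (n+1), 2 * μ * ((n+2).choose (i+1) : ℝ) / D
        = 2 * μ * (2^(n+2) - 2) / D := by
      rw [← Finset.sum_div, ← Finset.mul_sum, hsum]
    rw [this]
    field_simp
    ring
  · intro i hi
    rcases Nat.eq_zero_or_pos i with rfl | hi0
    · -- i = 0
      have h1 : (1:ℕ) ≠ 0 ∧ (1:ℕ) ≠ N := ⟨one_ne_zero, by omega⟩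
      simp only [hawkDoveStat, hawkDoveUp, hawkDoveDown, if_pos (Or.inl rfl), if_pos rfl,
        if_neg (by omega : ¬((1:ℕ) = 0 ∨ 1 = N)), if_neg (by omega : ¬(1 = N)),
        Nat.choose_one_right, true_or, ↓reduceIte]
      field_simp
      rw [Nat.choose_one_right]; ring
    · rcases Nat.eq_or_lt_of_le (Nat.succ_le_of_lt hi) with heq | hlt
      · -- i + 1 = N
        have hiN : i = N - 1 := by omega
        simp only [hawkDoveStat, hawkDoveUp, hawkDoveDown,
          if_neg (by omega : ¬(i = 0 ∨ i = N)), if_neg (by omega : ¬(i = 0)),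
          if_pos (Or.inr heq), if_pos heq]
        have hch : N.choose i = N := by
          rw [hiN, Nat.choose_symm (by omega : 1 ≤ N)]
          simp [Nat.choose_one_right]
        rw [hch]
        have hNi : (N:ℝ) - i = 1 := by
          have : (i:ℝ) = (N:ℝ) - 1 := by
            have := heq; push_cast [← this]; ring
          rw [this]; ring
        rw [hNi]
        field_simp
      · -- 1 ≤ i, i+1 ≤ N-1
        simp only [hawkDoveStat, hawkDoveUp, hawkDoveDown,
          if_neg (by omega : ¬(i = 0 ∨ i = N)), if_neg (by omega : ¬(i = 0)),
          if_neg (by omega : ¬(i + 1 = 0 ∨ i + 1 = N)), if_neg (by omega : ¬(i + 1 = N))]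
        have key : (N.choose (i+1) : ℝ) * (i+1) = (N.choose i : ℝ) * ((N:ℝ) - i) := by
          have h := Nat.choose_succ_right_eq N i
          have hcast : (N.choose (i+1) : ℝ) * (i+1) = (N.choose i : ℝ) * ((N - i : ℕ) : ℝ) := by
            exact_mod_cast congrArg (Nat.cast : ℕ → ℝ) h
          rw [hcast, Nat.cast_sub (by omega)]
        field_simp
        rw [Nat.cast_add, Nat.cast_one, key]
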